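/- (Approximate lower Hermite–Hadamard with general probability measure.) Let D be a convex subset of a real linear space X, 𝒜 a σ-algebra containing the Borel subsets of [0,1], and μ a probability measure on ([0,1],𝒜) whose support is not a singleton. Let μ₁ := ∫_{[0,1]} t dμ(t) and S(μ) := μ([0,μ₁])·∫_{(μ₁,1]} t dμ(t) − μ((μ₁,1])·∫_{[0,μ₁]} t dμ(t). Assume f : D → ℝ is hemi-μ-integrable and satisfies f((1−t)x+ty) ≤ (1−t)f(x) + t f(y) + η_{x,y}(t) for all x ≠ y in D and t ∈ [0,1], where I(x,y) := ∫_{(μ₁,1]}∫_{[0,μ₁]} (t''−t')·η_{(1−t')x+t'y, (1−t'')x+t''y}((μ₁−t')/(t''−t')) dμ(t') dμ(t'') exists in [−∞,∞]. Then f((1−μ₁)x + μ₁y) ≤ ∫_{[0,1]} f((1−t)x+ty) dμ(t) + I(x,y)/S(μ) for all x ≠ y in D. -/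

import Mathlib

open MeasureTheory

/-- Theorem 4: approximate lower Hermite–Hadamard with a general
probability measure on `[0,1]`: if `f` is hemi-`μ`-integrable and approximately
convex with error `η`, then
`f((1−μ₁)x + μ₁y) ≤ ∫ f((1−t)x+ty) dμ(t) + I(x,y)/S(μ)`. -/
theorem approx_lower_hh_general_measure
    {X : Type*} [AddCommGroup X] [Module ℝ X]
    (D : Set X) (hD : Convex ℝ D)
    (μ : Measure ℝ) [IsProbabilityMeasure μ]
    (hμc : μ (Set.Icc (0:ℝ) 1)ᶜ = 0)
    -- the support of μ is not a singleton
    (hsupp : ¬ ∃ c : ℝ, μ ({c}ᶜ) = 0)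
    (μ₁ : ℝ) (hμ₁ : μ₁ = ∫ t, t ∂μ)
    (S : ℝ)
    (hS : S = (μ (Set.Icc 0 μ₁)).toReal * (∫ t in Set.Ioc μ₁ 1, t ∂μ) -
        (μ (Set.Ioc μ₁ 1)).toReal * (∫ t in Set.Icc 0 μ₁, t ∂μ))
    (f : X → ℝ) (η : X → X → ℝ → ℝ)
    -- hemi-μ-integrability of f
    (hf : ∀ x ∈ D, ∀ y ∈ D, Integrable (fun t => f ((1 - t) • x + t • y)) μ)
    -- approximate convexity
    (hconv : ∀ x ∈ D, ∀ y ∈ D, x ≠ y → ∀ t ∈ Set.Icc (0:ℝ) 1,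
        f ((1 - t) • x + t • y) ≤ (1 - t) * f x + t * f y + η x y t)
    -- existence (integrability) of the double error integral I(x,y)
    (hη₁ : ∀ x ∈ D, ∀ y ∈ D, x ≠ y → ∀ t'' ∈ Set.Ioc μ₁ 1,
        IntegrableOn
          (fun t' => (t'' - t') *
            η ((1 - t') • x + t' • y) ((1 - t'') • x + t'' • y)
              ((μ₁ - t') / (t'' - t')))
          (Set.Icc 0 μ₁) μ)
    (hη₂ : ∀ x ∈ D, ∀ y ∈ D, x ≠ y →
        IntegrableOn
          (fun t'' => ∫ t' in Set.Icc 0 μ₁, (t'' - t') *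
            η ((1 - t') • x + t' • y) ((1 - t'') • x + t'' • y)
              ((μ₁ - t') / (t'' - t')) ∂μ)
          (Set.Ioc μ₁ 1) μ) :
    ∀ x ∈ D, ∀ y ∈ D, x ≠ y →
      f ((1 - μ₁) • x + μ₁ • y) ≤
        (∫ t, f ((1 - t) • x + t • y) ∂μ) +
        (∫ t'' in Set.Ioc μ₁ 1, ∫ t' in Set.Icc 0 μ₁, (t'' - t') *
            η ((1 - t') • x + t' • y) ((1 - t'') • x + t'' • y)
              ((μ₁ - t') / (t'' - t')) ∂μ ∂μ) / S := by
  -- basic a.e. facts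
  have haeIcc : ∀ᵐ t ∂μ, t ∈ Set.Icc (0:ℝ) 1 := by
    have he : {t : ℝ | ¬ t ∈ Set.Icc (0:ℝ) 1} = (Set.Icc (0:ℝ) 1)ᶜ := rfl
    rw [ae_iff, he]
    exact hμc
  have hid : Integrable (fun t : ℝ => t) μ := by
    refine Integrable.mono' (integrable_const 1) measurable_id.aestronglyMeasurable ?_
    filter_upwards [haeIcc] with t ht
    rw [Real.norm_eq_abs, abs_le]
    exact ⟨by linarith [ht.1], ht.2⟩
  have hμ₁0 : 0 ≤ μ₁ := by
    rw [hμ₁]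
    refine integral_nonneg_of_ae ?_
    filter_upwards [haeIcc] with t ht using ht.1
  have hμ₁1 : μ₁ ≤ 1 := by
    rw [hμ₁]
    calc ∫ t, t ∂μ ≤ ∫ _t, (1:ℝ) ∂μ := by
          refine integral_mono_ae hid (integrable_const 1) ?_
          filter_upwards [haeIcc] with t ht using ht.2
      _ = 1 := by simp
  set A := Set.Icc (0:ℝ) μ₁ with hA
  set B := Set.Ioc μ₁ 1 with hB
  have hAmeas : MeasurableSet A := measurableSet_Icc
  have hBmeas : MeasurableSet B := measurableSet_Ioc
  have hABdisj : Disjoint A B := by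
    rw [Set.disjoint_left]
    rintro t ⟨_, h2⟩ ⟨h3, _⟩
    exact absurd h2 (not_le.mpr h3)
  have hABunion : A ∪ B = Set.Icc (0:ℝ) 1 := Set.Icc_union_Ioc_eq_Icc hμ₁0 hμ₁1
  have hcompl : μ (A ∪ B)ᶜ = 0 := by rw [hABunion]; exact hμc
  have hsplit : ∀ g : ℝ → ℝ, Integrable g μ →
      ∫ t, g t ∂μ = (∫ t in A, g t ∂μ) + ∫ t in B, g t ∂μ := by
    intro g hg
    have h0 : μ.restrict (A ∪ B)ᶜ = 0 := Measure.restrict_eq_zero.mpr hcompl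
    rw [← integral_add_compl (hAmeas.union hBmeas) hg,
      setIntegral_union hABdisj hBmeas hg.integrableOn hg.integrableOn]
    rw [show (∫ t in (A ∪ B)ᶜ, g t ∂μ) = 0 by rw [h0, integral_zero_measure]]
    ring
  -- measures
  set a := (μ A).toReal with ha
  set b := (μ B).toReal with hb
  have hab : a + b = 1 := by
    have h1 : μ A + μ B = 1 := by
      rw [← measure_union hABdisj hBmeas, hABunion]
      have := measure_add_measure_compl (μ := μ) (measurableSet_Icc (a := (0:ℝ)) (b := 1))
      rw [hμc, add_zero, measure_univ] at this
      exact this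
    rw [ha, hb, ← ENNReal.toReal_add (measure_ne_top μ A) (measure_ne_top μ B), h1,
      ENNReal.toReal_one]
  have ha0 : 0 ≤ a := ENNReal.toReal_nonneg
  have hb0 : 0 ≤ b := ENNReal.toReal_nonneg
  set IA := ∫ t in A, t ∂μ with hIA
  set IB := ∫ t in B, t ∂μ with hIB
  have hIAB : IA + IB = μ₁ := by rw [hμ₁, hsplit _ hid]
  have hS' : S = μ₁ * a - IA := by linear_combination hS + a * hIAB - IA * hab
  have hS'' : S = IB - μ₁ * b := by linear_combination hS - b * hIAB + IB * hab
  -- S as set integrals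
  have hSA : S = ∫ t in A, (μ₁ - t) ∂μ := by
    rw [integral_sub (integrable_const μ₁).integrableOn hid.integrableOn, setIntegral_const,
      smul_eq_mul]
    rw [hS', ← hIA, measureReal_def, ← ha]
    ring
  have hSB : S = ∫ t in B, (t - μ₁) ∂μ := by
    rw [integral_sub hid.integrableOn (integrable_const μ₁).integrableOn, setIntegral_const,
      smul_eq_mul]
    rw [hS'', ← hIB, measureReal_def, ← hb]
    ring
  have hS0 : 0 ≤ S := by
    rw [hSA]
    exact setIntegral_nonneg hAmeas (fun t ht => by linarith [ht.2])
  have hSpos : 0 < S := by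
    rcases hS0.lt_or_eq with h | h
    · exact h
    exfalso
    apply hsupp
    refine ⟨μ₁, ?_⟩
    -- μ B = 0
    have hBzero : μ B = 0 := by
      have hnn : 0 ≤ᵐ[μ.restrict B] fun t => t - μ₁ :=
        (ae_restrict_iff' hBmeas).mpr (ae_of_all _ fun t ht => by
          show (0:ℝ) ≤ t - μ₁
          linarith [ht.1])
      have hint : Integrable (fun t => t - μ₁) (μ.restrict B) :=
        (hid.sub (integrable_const μ₁)).integrableOn
      have hzero : (fun t => t - μ₁) =ᵐ[μ.restrict B] 0 := by
        rw [← integral_eq_zero_iff_of_nonneg_ae hnn hint]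
        rw [← hSB, ← h]
      have hfalse : ∀ᵐ t ∂μ.restrict B, False := by
        filter_upwards [hzero, ae_restrict_mem hBmeas] with t h1 h2
        have h3 : t - μ₁ = 0 := h1
        have h4 : t = μ₁ := by linarith [sub_eq_zero.mp h3]
        exact absurd h2.1 (by rw [h4]; exact lt_irrefl μ₁)
      have h5 : μ.restrict B Set.univ = 0 := by
        have := ae_iff.mp hfalse
        simpa using this
      rwa [Measure.restrict_apply_univ] at h5
    -- on A, t = μ₁ a.e.
    have hAzero : μ ({μ₁}ᶜ ∩ A) = 0 := by
      have hnn : 0 ≤ᵐ[μ.restrict A] fun t => μ₁ - t :=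
        (ae_restrict_iff' hAmeas).mpr (ae_of_all _ fun t ht => by
          show (0:ℝ) ≤ μ₁ - t
          linarith [ht.2])
      have hint : Integrable (fun t => μ₁ - t) (μ.restrict A) :=
        ((integrable_const μ₁).sub hid).integrableOn
      have hzero : (fun t => μ₁ - t) =ᵐ[μ.restrict A] 0 := by
        rw [← integral_eq_zero_iff_of_nonneg_ae hnn hint]
        rw [← hSA, ← h]
      have hzero' : ∀ᵐ t ∂μ.restrict A, t = μ₁ := by
        filter_upwards [hzero] with t h1
        have h3 : μ₁ - t = 0 := h1
        linarith [sub_eq_zero.mp h3]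
      have h0 : μ {t : ℝ | ¬ (t ∈ A → t = μ₁)} = 0 :=
        ae_iff.mp ((ae_restrict_iff' hAmeas).mp hzero')
      refine measure_mono_null ?_ h0
      intro t ht
      exact fun h' => ht.1 (h' ht.2)
    have hsubset : ({μ₁}ᶜ : Set ℝ) ⊆ (Set.Icc (0:ℝ) 1)ᶜ ∪ (B ∪ ({μ₁}ᶜ ∩ A)) := by
      intro t ht
      by_cases h01 : t ∈ Set.Icc (0:ℝ) 1
      · right
        have : t ∈ A ∪ B := by rw [hABunion]; exact h01
        rcases this with hA' | hB'
        · right; exact ⟨ht, hA'⟩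
        · left; exact hB'
      · left; exact h01
    refine le_antisymm ?_ zero_le
    calc μ ({μ₁}ᶜ) ≤ μ ((Set.Icc (0:ℝ) 1)ᶜ ∪ (B ∪ ({μ₁}ᶜ ∩ A))) := measure_mono hsubset
      _ ≤ μ (Set.Icc (0:ℝ) 1)ᶜ + μ (B ∪ ({μ₁}ᶜ ∩ A)) := measure_union_le _ _
      _ ≤ μ (Set.Icc (0:ℝ) 1)ᶜ + (μ B + μ ({μ₁}ᶜ ∩ A)) :=
          add_le_add le_rfl (measure_union_le _ _)
      _ = 0 := by rw [hμc, hBzero, hAzero]; simp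
  -- main part
  intro x hx y hy hxy
  have hG : Integrable (fun t => f ((1 - t) • x + t • y)) μ := hf x hx y hy
  set c := f ((1 - μ₁) • x + μ₁ • y) with hc
  set GA := ∫ t in A, f ((1 - t) • x + t • y) ∂μ with hGA
  set GB := ∫ t in B, f ((1 - t) • x + t • y) ∂μ with hGB
  -- pointwise key inequality
  have key : ∀ t'' ∈ B, ∀ t' ∈ A,
      (t'' - t') * c ≤ (t'' - μ₁) * f ((1 - t') • x + t' • y)
        + (μ₁ - t') * f ((1 - t'') • x + t'' • y)
        + (t'' - t') * η ((1 - t') • x + t' • y) ((1 - t'') • x + t'' • y)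
            ((μ₁ - t') / (t'' - t')) := by
    intro t'' ht'' t' ht'
    have hlt : t' < t'' := lt_of_le_of_lt ht'.2 ht''.1
    have hd : (0:ℝ) < t'' - t' := by linarith
    set s := (μ₁ - t') / (t'' - t') with hsdef
    have hs0 : 0 ≤ s := div_nonneg (by linarith [ht'.2]) hd.le
    have hs1 : s ≤ 1 := (div_le_one hd).mpr (by linarith [ht''.1])
    have hsmul : s * (t'' - t') = μ₁ - t' := div_mul_cancel₀ _ (ne_of_gt hd)
    have hpx : (1 - t') • x + t' • y ∈ D :=
      hD hx hy (by linarith [ht'.1, ht'.2]) ht'.1 (by ring)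
    have hpy : (1 - t'') • x + t'' • y ∈ D :=
      hD hx hy (by linarith [ht''.2]) (by linarith [ht''.1]) (by ring)
    have hne : (1 - t') • x + t' • y ≠ (1 - t'') • x + t'' • y := by
      intro h
      apply hxy
      have h0 : (t'' - t') • (x - y) = 0 := by
        have h2 : (t'' - t') • (x - y)
            = ((1 - t') • x + t' • y) - ((1 - t'') • x + t'' • y) := by module
        rw [h2, h, sub_self]
      have h3 : x - y = 0 := by
        calc x - y = (t'' - t')⁻¹ • ((t'' - t') • (x - y)) :=
              (inv_smul_smul₀ (ne_of_gt hd) _).symm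
          _ = 0 := by rw [h0, smul_zero]
      exact sub_eq_zero.mp h3
    have hcx := hconv _ hpx _ hpy hne s ⟨hs0, hs1⟩
    have hμcomb : (1 - s) * t' + s * t'' = μ₁ := by
      have h1 : (1 - s) * t' + s * t'' = t' + s * (t'' - t') := by ring
      rw [h1, hsmul]; ring
    have hpoint : (1 - s) • ((1 - t') • x + t' • y) + s • ((1 - t'') • x + t'' • y)
        = (1 - μ₁) • x + μ₁ • y := by
      rw [← hμcomb]
      module
    rw [hpoint] at hcx
    have hmul := mul_le_mul_of_nonneg_left hcx hd.le
    have h1 : (t'' - t') * (1 - s) = t'' - μ₁ := by linear_combination -hsmul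
    have h2 : (t'' - t') * s = μ₁ - t' := by linear_combination hsmul
    calc (t'' - t') * c ≤ (t'' - t') * ((1 - s) * f ((1 - t') • x + t' • y)
          + s * f ((1 - t'') • x + t'' • y)
          + η ((1 - t') • x + t' • y) ((1 - t'') • x + t'' • y) s) := hmul
      _ = (t'' - μ₁) * f ((1 - t') • x + t' • y)
          + (μ₁ - t') * f ((1 - t'') • x + t'' • y)
          + (t'' - t') * η ((1 - t') • x + t' • y) ((1 - t'') • x + t'' • y) s := by
            linear_combination f ((1 - t') • x + t' • y) * h1
              + f ((1 - t'') • x + t'' • y) * h2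
  -- inner integration over t' ∈ A
  have inner : ∀ t'' ∈ B,
      (t'' * a - IA) * c ≤ (t'' - μ₁) * GA
        + S * f ((1 - t'') • x + t'' • y)
        + (∫ t' in A, (t'' - t') *
            η ((1 - t') • x + t' • y) ((1 - t'') • x + t'' • y)
              ((μ₁ - t') / (t'' - t')) ∂μ) := by
    intro t'' ht''
    have i1 : IntegrableOn (fun t' => (t'' - t') * c) A μ :=
      (((integrable_const t'').sub hid).mul_const c).integrableOn
    have i2 : IntegrableOn (fun t' => (t'' - μ₁) * f ((1 - t') • x + t' • y)
        + (μ₁ - t') * f ((1 - t'') • x + t'' • y)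
        + (t'' - t') * η ((1 - t') • x + t' • y) ((1 - t'') • x + t'' • y)
            ((μ₁ - t') / (t'' - t'))) A μ := by
      refine Integrable.add (Integrable.add ?_ ?_) ?_
      · exact (hG.const_mul _).integrableOn
      · exact (((integrable_const μ₁).sub hid).mul_const _).integrableOn
      · exact hη₁ x hx y hy hxy t'' ht''
    have hmono := setIntegral_mono_on i1 i2 hAmeas (fun t' ht' => key t'' ht'' t' ht')
    have e1 : ∫ t' in A, (t'' - t') * c ∂μ = (t'' * a - IA) * c := by
      rw [show (fun t' => (t'' - t') * c) = fun t' => (t'' - t') * c from rfl]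
      rw [integral_mul_const]
      rw [integral_sub (integrable_const t'').integrableOn hid.integrableOn,
        setIntegral_const, smul_eq_mul, ← hIA, measureReal_def, ← ha]
      ring
    have e2 : ∫ t' in A, ((t'' - μ₁) * f ((1 - t') • x + t' • y)
        + (μ₁ - t') * f ((1 - t'') • x + t'' • y)
        + (t'' - t') * η ((1 - t') • x + t' • y) ((1 - t'') • x + t'' • y)
            ((μ₁ - t') / (t'' - t'))) ∂μ
        = (t'' - μ₁) * GA + S * f ((1 - t'') • x + t'' • y)
          + (∫ t' in A, (t'' - t') *
              η ((1 - t') • x + t' • y) ((1 - t'') • x + t'' • y)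
                ((μ₁ - t') / (t'' - t')) ∂μ) := by
      have j1 : Integrable (fun t' => (t'' - μ₁) * f ((1 - t') • x + t' • y))
          (μ.restrict A) := (hG.const_mul _).integrableOn
      have j2 : Integrable (fun t' => (μ₁ - t') * f ((1 - t'') • x + t'' • y))
          (μ.restrict A) := (((integrable_const μ₁).sub hid).mul_const _).integrableOn
      have j12 : Integrable (fun t' => (t'' - μ₁) * f ((1 - t') • x + t' • y)
          + (μ₁ - t') * f ((1 - t'') • x + t'' • y)) (μ.restrict A) := j1.add j2
      have j3 : Integrable (fun t' => (t'' - t') *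
          η ((1 - t') • x + t' • y) ((1 - t'') • x + t'' • y)
            ((μ₁ - t') / (t'' - t'))) (μ.restrict A) := hη₁ x hx y hy hxy t'' ht''
      rw [integral_add j12 j3, integral_add j1 j2]
      rw [integral_const_mul, integral_mul_const,
        integral_sub (integrable_const μ₁).integrableOn hid.integrableOn,
        setIntegral_const, smul_eq_mul, ← hIA, measureReal_def, ← ha, ← hGA]
      rw [hS']
      ring
    rw [e1, e2] at hmono
    exact hmono
  -- outer integration over t'' ∈ B
  set Iη := ∫ t'' in B, ∫ t' in A, (t'' - t') *
      η ((1 - t') • x + t' • y) ((1 - t'') • x + t'' • y)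
        ((μ₁ - t') / (t'' - t')) ∂μ ∂μ with hIη
  have o1 : IntegrableOn (fun t'' => (t'' * a - IA) * c) B μ :=
    (((hid.mul_const a).sub (integrable_const IA)).mul_const c).integrableOn
  have o2 : IntegrableOn (fun t'' => (t'' - μ₁) * GA
      + S * f ((1 - t'') • x + t'' • y)
      + (∫ t' in A, (t'' - t') *
          η ((1 - t') • x + t' • y) ((1 - t'') • x + t'' • y)
            ((μ₁ - t') / (t'' - t')) ∂μ)) B μ := by
    refine Integrable.add (Integrable.add ?_ ?_) ?_
    · exact ((hid.sub (integrable_const μ₁)).mul_const GA).integrableOn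
    · exact (hG.const_mul S).integrableOn
    · exact hη₂ x hx y hy hxy
  have hmono2 := setIntegral_mono_on o1 o2 hBmeas inner
  have e3 : ∫ t'' in B, (t'' * a - IA) * c ∂μ = S * c := by
    rw [integral_mul_const]
    rw [integral_sub (hid.mul_const a).integrableOn (integrable_const IA).integrableOn,
      integral_mul_const, setIntegral_const, smul_eq_mul, ← hIB, measureReal_def, ← hb]
    rw [hS]
    ring
  have e4 : ∫ t'' in B, ((t'' - μ₁) * GA
      + S * f ((1 - t'') • x + t'' • y)
      + (∫ t' in A, (t'' - t') *
          η ((1 - t') • x + t' • y) ((1 - t'') • x + t'' • y)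
            ((μ₁ - t') / (t'' - t')) ∂μ)) ∂μ
      = S * GA + S * GB + Iη := by
    have k1 : Integrable (fun t'' => (t'' - μ₁) * GA) (μ.restrict B) :=
      ((hid.sub (integrable_const μ₁)).mul_const GA).integrableOn
    have k2 : Integrable (fun t'' => S * f ((1 - t'') • x + t'' • y)) (μ.restrict B) :=
      (hG.const_mul S).integrableOn
    have k12 : Integrable (fun t'' => (t'' - μ₁) * GA
        + S * f ((1 - t'') • x + t'' • y)) (μ.restrict B) := k1.add k2
    have k3 : Integrable (fun t'' => ∫ t' in A, (t'' - t') *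
        η ((1 - t') • x + t' • y) ((1 - t'') • x + t'' • y)
          ((μ₁ - t') / (t'' - t')) ∂μ) (μ.restrict B) := hη₂ x hx y hy hxy
    rw [integral_add k12 k3, integral_add k1 k2]
    rw [integral_mul_const, integral_const_mul,
      integral_sub hid.integrableOn (integrable_const μ₁).integrableOn,
      setIntegral_const, smul_eq_mul, ← hIB, measureReal_def, ← hb, ← hGB, ← hIη]
    rw [hS'']
    ring
  rw [e3, e4] at hmono2
  -- conclude
  have hT : (∫ t, f ((1 - t) • x + t • y) ∂μ) = GA + GB := hsplit _ hG
  rw [hT]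
  have h2 : c - (GA + GB) ≤ Iη / S := by
    rw [le_div_iff₀ hSpos]
    nlinarith [hmono2]
  linarith
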